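/- A K-linear map X : T → T of degree 2 (i.e. X restricts to X^A : A → Q and vanishes on P and Q) is a derivation of the triole algebra T if and only if X^A is a Q-valued K-linear derivation of A, i.e. X^A(ab) = a·X^A(b) + b·X^A(a) for all a,b ∈ A. Consequently the space D(T)₂ of degree-2 derivations of T is isomorphic as an A-module to Der_K(A,Q), the module of Q-valued derivations of A. -/

import Mathlib

variable {K A P Q : Type*}
variable [Field K] [CharZero K] [CommRing A] [Algebra K A]
variable [AddCommGroup P] [Module A P] [AddCommGroup Q] [Module A Q]
variable [Module K P] [Module K Q] [IsScalarTower K A P] [IsScalarTower K A Q]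

/-- Multiplication of the triole algebra `T = A ⊕ P ⊕ Q` determined by the
`A`-bilinear form `g : P × P → Q`. -/
def trioleMul (g : P →ₗ[A] P →ₗ[A] Q) (x y : A × P × Q) : A × P × Q :=
  (x.1 * y.1,
    x.1 • y.2.1 + y.1 • x.2.1,
    x.1 • y.2.2 + y.1 • x.2.2 + g x.2.1 y.2.1)

/-- `X : T → T` is a derivation of degree `k` of the triole algebra: the graded
Leibniz rule `X (s t) = X s · t + (-1)^(k·i) s · X t` holds for all homogeneous
`s ∈ Tᵢ` (for `i = 0, 1, 2`; the homogeneous components of all other degrees are zero,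
where the Leibniz rule holds trivially) and all `t ∈ T`. -/
def IsTrioleDeriv (g : P →ₗ[A] P →ₗ[A] Q) (k : ℤ)
    (X : (A × P × Q) →ₗ[K] (A × P × Q)) : Prop :=
  (∀ (a : A) (t : A × P × Q),
    X (trioleMul g (a, 0, 0) t)
      = trioleMul g (X (a, 0, 0)) t + trioleMul g (a, 0, 0) (X t)) ∧
  (∀ (p : P) (t : A × P × Q),
    X (trioleMul g (0, p, 0) t)
      = trioleMul g (X (0, p, 0)) t + ((-1 : K) ^ k) • trioleMul g (0, p, 0) (X t)) ∧
  (∀ (q : Q) (t : A × P × Q),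
    X (trioleMul g (0, 0, q) t)
      = trioleMul g (X (0, 0, q)) t + trioleMul g (0, 0, q) (X t))


/-- The degree-2 `K`-linear map `T → T` with the single component `X^A : A → Q`. -/
def deg2Map (XA : A →ₗ[K] Q) : (A × P × Q) →ₗ[K] (A × P × Q) :=
  LinearMap.prod 0 (LinearMap.prod 0 (XA ∘ₗ LinearMap.fst K A (P × Q)))

/-- `X` has degree `2`: it shifts the homogeneous components of `T = A ⊕ P ⊕ Q` by two. -/
def IsDegTwoMap (X : (A × P × Q) →ₗ[K] (A × P × Q)) : Prop :=
  (∀ a : A, (X (a, 0, 0)).1 = 0 ∧ (X (a, 0, 0)).2.1 = 0) ∧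
  (∀ p : P, X (0, p, 0) = 0) ∧
  (∀ q : Q, X (0, 0, q) = 0)

/-- a degree-2 map is a derivation of the triole algebra iff its component
`X^A : A → Q` is a `Q`-valued derivation of `A`; consequently `D(T)₂ ≅ Der_K(A,Q)`. -/
theorem degree_two_triole_derivations (g : P →ₗ[A] P →ₗ[A] Q) :
    (∀ XA : A →ₗ[K] Q,
      IsTrioleDeriv g 2 (deg2Map XA) ↔
        (∀ a b : A, XA (a * b) = a • XA b + b • XA a)) ∧
    -- the correspondence `XA ↦ deg2Map XA` is injective
    (∀ XA XA' : A →ₗ[K] Q, deg2Map (P := P) XA = deg2Map XA' → XA = XA') ∧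
    -- and every degree-2 derivation of `T` arises this way:
    (∀ X : (A × P × Q) →ₗ[K] (A × P × Q), IsDegTwoMap X → IsTrioleDeriv g 2 X →
      ∃ XA : A →ₗ[K] Q, (∀ a b : A, XA (a * b) = a • XA b + b • XA a) ∧ X = deg2Map XA) := by
  have hd2 : ∀ (XA : A →ₗ[K] Q) (x : A × P × Q),
      deg2Map (P := P) XA x = (0, 0, XA x.1) := by
    intro XA x; simp [deg2Map]
  refine ⟨?_, ?_, ?_⟩
  · intro XA
    constructor
    · intro h a b
      have := h.1 a (b, 0, 0)
      simp only [trioleMul, hd2] at this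
      have h3 := congrArg (fun z => z.2.2) this
      simpa [add_comm] using h3
    · intro h
      refine ⟨?_, ?_, ?_⟩
      · intro a t
        simp only [trioleMul, hd2, Prod.mk_add_mk, Prod.mk.injEq]
        refine ⟨by ring, by simp, ?_⟩
        simp [h a t.1, add_comm]
      · intro p t
        simp only [trioleMul, hd2]
        simp [Prod.ext_iff]
      · intro q t
        simp only [trioleMul, hd2]
        simp [Prod.ext_iff]
  · intro XA XA' hEq
    ext a
    have := congrArg (fun f => (f (a, 0, 0)).2.2) hEq
    simpa [hd2] using this
  · intro X hdeg hder
    refine ⟨(LinearMap.snd K P Q) ∘ₗ (LinearMap.snd K A (P × Q)) ∘ₗ X ∘ₗ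
      (LinearMap.inl K A (P × Q)), ?_, ?_⟩
    · intro a b
      have := hder.1 a ((b : A), (0 : P), (0 : Q))
      simp only [trioleMul] at this
      have h3 := congrArg (fun z => z.2.2) this
      have hXb := hdeg.1 b
      have hXa := hdeg.1 a
      simp only [mul_zero, smul_zero, zero_add, add_zero, map_zero, zero_smul] at h3
      simpa [LinearMap.inl, add_comm, hXa.2, hXb.2, Prod.mk_zero_zero] using h3
    · refine LinearMap.ext fun t => ?_
      have h1 : X t = X (t.1, 0, 0) + X (0, t.2.1, 0) + X (0, 0, t.2.2) := by
        rw [← map_add, ← map_add]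
        congr 1
        simp [Prod.ext_iff]
      rw [h1, hd2]
      rw [hdeg.2.1, hdeg.2.2, add_zero, add_zero]
      refine Prod.ext ?_ (Prod.ext ?_ ?_)
      · simpa using (hdeg.1 t.1).1
      · simpa using (hdeg.1 t.1).2
      · simp [LinearMap.inl, Prod.mk_zero_zero]
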